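/- Let (P₊, P₋) be a positive solution of the Riccati system. Then there is a constant C > 0 such that for every t ∈ [0,T] there exist v̂₊(t), v̂₋(t) ∈ ℝ^m₊ with |v̂₊(t)| ≤ C and |v̂₋(t)| ≤ C satisfying H₊(t, v̂₊(t), P_{+,t}, P_{−,t}) = H*₊(t, P_{+,t}, P_{−,t}) and H₋(t, v̂₋(t), P_{+,t}, P_{−,t}) = H*₋(t, P_{+,t}, P_{−,t}); i.e. the infima defining H*₊ and H*₋ along the solution are attained at points of uniformly bounded norm. -/

import Mathlib

open MeasureTheory Set

/-- The Hamiltonian `H₊(t, v, P₊, P₋)` of the constrained LQ problem. -/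
noncomputable def Hplus {E : Type} [MeasurableSpace E] {m n ℓ : ℕ}
    (μ : ℝ → Fin m → ℝ) (σ : ℝ → Matrix (Fin m) (Fin n) ℝ)
    (ν : Fin ℓ → Measure E) (β : Fin ℓ → ℝ → E → Fin m → ℝ)
    (t : ℝ) (v : Fin m → ℝ) (Pp Pm : ℝ) : ℝ :=
  Pp * ∑ k, (∑ i, σ t i k * v i) ^ 2 + 2 * Pp * ∑ i, μ t i * v i
    + ∑ j, ∫ e, (Pp * ((max (1 + ∑ i, v i * β j t e i) 0) ^ 2
          - 1 - 2 * ∑ i, v i * β j t e i)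
        + Pm * (max (-(1 + ∑ i, v i * β j t e i)) 0) ^ 2) ∂(ν j)

/-- The Hamiltonian `H₋(t, v, P₊, P₋)` of the constrained LQ problem. -/
noncomputable def Hminus {E : Type} [MeasurableSpace E] {m n ℓ : ℕ}
    (μ : ℝ → Fin m → ℝ) (σ : ℝ → Matrix (Fin m) (Fin n) ℝ)
    (ν : Fin ℓ → Measure E) (β : Fin ℓ → ℝ → E → Fin m → ℝ)
    (t : ℝ) (v : Fin m → ℝ) (Pp Pm : ℝ) : ℝ :=
  Pm * ∑ k, (∑ i, σ t i k * v i) ^ 2 - 2 * Pm * ∑ i, μ t i * v i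
    + ∑ j, ∫ e, (Pm * ((max (1 - ∑ i, v i * β j t e i) 0) ^ 2
          - 1 + 2 * ∑ i, v i * β j t e i)
        + Pp * (max (-(1 - ∑ i, v i * β j t e i)) 0) ^ 2) ∂(ν j)

/-- `H*₊(t, P₊, P₋) = inf_{v ∈ ℝ^m₊} H₊(t, v, P₊, P₋)`. -/
noncomputable def HstarPlus {E : Type} [MeasurableSpace E] {m n ℓ : ℕ}
    (μ : ℝ → Fin m → ℝ) (σ : ℝ → Matrix (Fin m) (Fin n) ℝ)
    (ν : Fin ℓ → Measure E) (β : Fin ℓ → ℝ → E → Fin m → ℝ)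
    (t : ℝ) (Pp Pm : ℝ) : ℝ :=
  sInf ((fun v => Hplus μ σ ν β t v Pp Pm) '' {v : Fin m → ℝ | ∀ i, 0 ≤ v i})

/-- `H*₋(t, P₊, P₋) = inf_{v ∈ ℝ^m₊} H₋(t, v, P₊, P₋)`. -/
noncomputable def HstarMinus {E : Type} [MeasurableSpace E] {m n ℓ : ℕ}
    (μ : ℝ → Fin m → ℝ) (σ : ℝ → Matrix (Fin m) (Fin n) ℝ)
    (ν : Fin ℓ → Measure E) (β : Fin ℓ → ℝ → E → Fin m → ℝ)
    (t : ℝ) (Pp Pm : ℝ) : ℝ :=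
  sInf ((fun v => Hminus μ σ ν β t v Pp Pm) '' {v : Fin m → ℝ | ∀ i, 0 ≤ v i})

/-- `Σ_t = σ_t σ_tᵀ + ∑_j ∫_E β_{j,t}(e) β_{j,t}(e)ᵀ ν_j(de)`, defined entrywise. -/
noncomputable def SigmaMat {E : Type} [MeasurableSpace E] {m n ℓ : ℕ}
    (σ : ℝ → Matrix (Fin m) (Fin n) ℝ) (ν : Fin ℓ → Measure E)
    (β : Fin ℓ → ℝ → E → Fin m → ℝ) (t : ℝ) : Matrix (Fin m) (Fin m) ℝ :=
  Matrix.of fun i k => (∑ j', σ t i j' * σ t k j') + ∑ j, ∫ e, β j t e i * β j t e k ∂(ν j)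

/-- A pair of continuous positive functions `(P₊, P₋)` on `[0,T]` solving the Riccati
system `P_{±,t} = 1 + ∫_t^T H*_±(s, P_{+,s}, P_{−,s}) ds`. -/
def IsPositiveRiccatiSolution {E : Type} [MeasurableSpace E] {m n ℓ : ℕ}
    (μ : ℝ → Fin m → ℝ) (σ : ℝ → Matrix (Fin m) (Fin n) ℝ)
    (ν : Fin ℓ → Measure E) (β : Fin ℓ → ℝ → E → Fin m → ℝ)
    (T : ℝ) (Pp Pm : ℝ → ℝ) : Prop :=
  ContinuousOn Pp (Icc 0 T) ∧ ContinuousOn Pm (Icc 0 T) ∧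
  (∀ t ∈ Icc (0:ℝ) T, 0 < Pp t ∧ 0 < Pm t) ∧
  (∀ t ∈ Icc (0:ℝ) T, Pp t = 1 + ∫ s in t..T, HstarPlus μ σ ν β s (Pp s) (Pm s)) ∧
  (∀ t ∈ Icc (0:ℝ) T, Pm t = 1 + ∫ s in t..T, HstarMinus μ σ ν β s (Pp s) (Pm s))


lemma wabs {pl ph w z : ℝ} (hpl : 0 < pl) (hw1 : pl ≤ w) (hw2 : w ≤ ph) : w * z ≤ ph * |z| := by
  rcases abs_cases z with ⟨h, h'⟩ | ⟨h, h'⟩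
  · rw [h]; nlinarith
  · rw [h]; nlinarith

lemma gbound {pl ph Pq Pr y : ℝ} (hpl : 0 < pl) (h1 : pl ≤ Pq) (h3 : Pq ≤ ph)
    (h2 : pl ≤ Pr) (h4 : Pr ≤ ph) :
    |Pq * ((max (1 + y) 0) ^ 2 - 1 - 2 * y) + Pr * (max (-(1 + y)) 0) ^ 2|
      ≤ 3 * ph * (1 + |y|) ^ 2 := by
  have hy1 : -|y| ≤ y := neg_abs_le y
  have hy2 : y ≤ |y| := le_abs_self y
  have hy0 : 0 ≤ |y| := abs_nonneg y
  set a := max (1 + y) 0 with hadef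
  set c := max (-(1 + y)) 0 with hcdef
  have ha0 : 0 ≤ a := le_max_right _ _
  have ha : a ≤ 1 + |y| := max_le (by linarith) (by linarith)
  have hc0 : 0 ≤ c := le_max_right _ _
  have hc : c ≤ 1 + |y| := max_le (by linarith) (by linarith)
  have hph : 0 < ph := hpl.trans_le (h1.trans h3)
  have ha2 : a ^ 2 ≤ (1 + |y|) ^ 2 := pow_le_pow_left₀ ha0 ha 2
  have hc2 : c ^ 2 ≤ (1 + |y|) ^ 2 := pow_le_pow_left₀ hc0 hc 2
  have e1 : Pq * a ^ 2 ≤ ph * (1 + |y|) ^ 2 :=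
    le_trans (mul_le_mul_of_nonneg_right h3 (sq_nonneg a)) (mul_le_mul_of_nonneg_left ha2 hph.le)
  have e3 : Pr * c ^ 2 ≤ ph * (1 + |y|) ^ 2 :=
    le_trans (mul_le_mul_of_nonneg_right h4 (sq_nonneg c)) (mul_le_mul_of_nonneg_left hc2 hph.le)
  have e2 : Pq * (-1 - 2 * y) ≤ ph * (1 + 2 * |y|) := by
    have := wabs hpl h1 h3 (z := -1 - 2 * y)
    have habs : |(-1 : ℝ) - 2 * y| ≤ 1 + 2 * |y| := by
      rw [abs_le]; constructor <;> linarith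
    nlinarith
  have e4 : Pq * (1 + 2 * y) ≤ ph * (1 + 2 * |y|) := by
    have := wabs hpl h1 h3 (z := 1 + 2 * y)
    have habs : |(1 : ℝ) + 2 * y| ≤ 1 + 2 * |y| := by
      rw [abs_le]; constructor <;> linarith
    nlinarith
  have hsq : 1 + 2 * |y| ≤ (1 + |y|) ^ 2 := by nlinarith
  rw [abs_le]; constructor
  · have g1 : 0 ≤ Pq * a ^ 2 := by nlinarith
    have g2 : 0 ≤ Pr * c ^ 2 := by nlinarith
    nlinarith
  · nlinarith

lemma gptbound {pl Pp Pm ph Cs y : ℝ} (hpl : 0 < pl) (h1 : pl ≤ Pp) (h3 : Pp ≤ ph)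
    (h2 : pl ≤ Pm) (hCs : 0 ≤ Cs) (hy1 : -Cs ≤ y) (hy2 : y ≤ Cs) :
    pl * y ^ 2 - Pp * (1 + 2 * Cs)
      ≤ Pp * ((max (1 + y) 0) ^ 2 - 1 - 2 * y) + Pm * (max (-(1 + y)) 0) ^ 2 := by
  set a := max (1 + y) 0 with hadef
  set c := max (-(1 + y)) 0 with hcdef
  have ha0 : 0 ≤ a := le_max_right _ _
  have hc0 : 0 ≤ c := le_max_right _ _
  have hde : a - c = 1 + y := max_zero_sub_max_neg_zero_eq_self _
  have hac : a * c = 0 := by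
    rcases le_or_gt 0 (1 + y) with h | h
    · have : c = 0 := max_eq_right (by linarith)
      rw [this, mul_zero]
    · have : a = 0 := max_eq_right (by linarith)
      rw [this, zero_mul]
  have hde2 : (1 + y) ^ 2 = a ^ 2 + c ^ 2 := by
    have h' : (1 + y) ^ 2 = (a - c) ^ 2 := by rw [hde]
    rw [h']; ring_nf; linarith only [hac]
  have hsum : pl * (1 + y) ^ 2 ≤ Pp * a ^ 2 + Pm * c ^ 2 := by
    rw [hde2]
    nlinarith [mul_le_mul_of_nonneg_right h1 (sq_nonneg a),
      mul_le_mul_of_nonneg_right h2 (sq_nonneg c)]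
  have h7 : (Pp - pl) * (1 + 2 * y) ≤ Pp * (1 + 2 * Cs) := by
    rcases le_or_gt 0 (1 + 2 * y) with h | h
    · nlinarith
    · nlinarith
  have hexp : pl * (1 + y) ^ 2 - Pp * (1 + 2 * y)
      = pl * y ^ 2 - (Pp - pl) * (1 + 2 * y) := by ring
  linarith only [hsum, h7, hexp]

lemma lin_lb {Pp ph Cs L : ℝ} (hPp : 0 < Pp) (hph : Pp ≤ ph) (hCs : 0 ≤ Cs)
    (hL : -Cs ≤ L) : -(ph * Cs) ≤ Pp * L := by
  rcases le_or_gt 0 L with h | h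
  · nlinarith
  · nlinarith

lemma exists_bounded_min
    {E : Type} [MeasurableSpace E] {m n ℓ : ℕ} (hm : 0 < m)
    (ν : Fin ℓ → Measure E) [∀ j, IsFiniteMeasure (ν j)]
    (μ0 : Fin m → ℝ) (σ0 : Matrix (Fin m) (Fin n) ℝ)
    (b : Fin ℓ → E → Fin m → ℝ)
    (hbmeas : ∀ j i, Measurable fun e => b j e i)
    (Cμ Cβ : ℝ) (hCμ : 0 ≤ Cμ) (hCβ : 0 ≤ Cβ)
    (hμ0 : ∀ i, |μ0 i| ≤ Cμ) (hb : ∀ j e i, |b j e i| ≤ Cβ)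
    (Pp Pm pl ph δ : ℝ) (hpl : 0 < pl) (hδ : 0 < δ)
    (h1 : pl ≤ Pp) (h2 : pl ≤ Pm) (h3 : Pp ≤ ph) (h4 : Pm ≤ ph)
    (hell : ∀ v : Fin m → ℝ, δ * ∑ i, v i ^ 2 ≤
      (∑ k, (∑ i, σ0 i k * v i) ^ 2) + ∑ j, ∫ e, (∑ i, v i * b j e i) ^ 2 ∂ν j)
    (R : ℝ)
    (hR : (2 * ph * (Cμ + (∑ j, (ν j univ).toReal) * Cβ)
        + ph * (∑ j, (ν j univ).toReal) + 1) * m / (pl * δ) + 1 ≤ R) :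
    ∃ v : Fin m → ℝ, (∀ i, 0 ≤ v i) ∧ Real.sqrt (∑ i, v i ^ 2) ≤ R ∧
      (Pp * ∑ k, (∑ i, σ0 i k * v i) ^ 2 + 2 * Pp * ∑ i, μ0 i * v i
        + ∑ j, ∫ e, (Pp * ((max (1 + ∑ i, v i * b j e i) 0) ^ 2 - 1 - 2 * ∑ i, v i * b j e i)
          + Pm * (max (-(1 + ∑ i, v i * b j e i)) 0) ^ 2) ∂(ν j))
      = sInf ((fun w => Pp * ∑ k, (∑ i, σ0 i k * w i) ^ 2 + 2 * Pp * ∑ i, μ0 i * w i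
        + ∑ j, ∫ e, (Pp * ((max (1 + ∑ i, w i * b j e i) 0) ^ 2 - 1 - 2 * ∑ i, w i * b j e i)
          + Pm * (max (-(1 + ∑ i, w i * b j e i)) 0) ^ 2) ∂(ν j)) '' {w : Fin m → ℝ | ∀ i, 0 ≤ w i}) := by
  have hPp : 0 < Pp := hpl.trans_le h1
  have hPm : 0 < Pm := hpl.trans_le h2
  have hph : 0 < ph := hPp.trans_le h3
  set V : ℝ := ∑ j, (ν j univ).toReal with hVdef
  have hV : 0 ≤ V := Finset.sum_nonneg fun j _ => ENNReal.toReal_nonneg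
  set K₁ : ℝ := 2 * ph * (Cμ + V * Cβ) with hK₁def
  set K₀ : ℝ := ph * V with hK₀def
  have hK₁ : 0 ≤ K₁ := by rw [hK₁def]; positivity
  have hK₀ : 0 ≤ K₀ := by positivity
  have hmR : (0:ℝ) < m := by exact_mod_cast hm
  have hnum : 0 ≤ (K₁ + K₀ + 1) * m / (pl * δ) := by positivity
  have hR1 : 1 ≤ R := by
    have : (K₁ + K₀ + 1) * m / (pl * δ) + 1 ≤ R := hR
    linarith
  set S : (Fin m → ℝ) → ℝ := fun v => ∑ i, |v i| with hSdef
  have hS0 : ∀ v, 0 ≤ S v := fun v => Finset.sum_nonneg fun i _ => abs_nonneg _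
  set x : Fin ℓ → (Fin m → ℝ) → E → ℝ := fun j v e => ∑ i, v i * b j e i with hxdef
  set g : Fin ℓ → (Fin m → ℝ) → E → ℝ := fun j v e =>
    Pp * ((max (1 + x j v e) 0) ^ 2 - 1 - 2 * x j v e)
      + Pm * (max (-(1 + x j v e)) 0) ^ 2 with hgdef
  set F : (Fin m → ℝ) → ℝ := fun v =>
    Pp * ∑ k, (∑ i, σ0 i k * v i) ^ 2 + 2 * Pp * ∑ i, μ0 i * v i
      + ∑ j, ∫ e, g j v e ∂(ν j) with hFdef
  have hxbd : ∀ j v e, |x j v e| ≤ Cβ * S v := by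
    intro j v e
    calc |x j v e| ≤ ∑ i, |v i * b j e i| := Finset.abs_sum_le_sum_abs _ _
    _ ≤ ∑ i, |v i| * Cβ := by
        refine Finset.sum_le_sum fun i _ => ?_
        rw [abs_mul]
        exact mul_le_mul_of_nonneg_left (hb j e i) (abs_nonneg _)
    _ = Cβ * S v := by rw [← Finset.sum_mul]; ring
  have hxm : ∀ j v, Measurable (x j v) := fun j v =>
    Finset.measurable_sum _ fun i _ => (hbmeas j i).const_mul (v i)
  have hgm : ∀ j v, Measurable (g j v) := by
    intro j v
    have h1x : Measurable fun e => 1 + x j v e := measurable_const.add (hxm j v)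
    exact ((((h1x.max measurable_const).pow_const 2).sub measurable_const).sub
        ((hxm j v).const_mul 2)).const_mul Pp |>.add
      (((h1x.neg.max measurable_const).pow_const 2).const_mul Pm)
  have hgbd : ∀ j v e, |g j v e| ≤ 3 * ph * (1 + Cβ * S v) ^ 2 := by
    intro j v e
    refine le_trans (gbound hpl h1 h3 h2 h4) ?_
    have hxe := hxbd j v e
    have h0 : 0 ≤ |x j v e| := abs_nonneg _
    have hmono : (1 + |x j v e|) ^ 2 ≤ (1 + Cβ * S v) ^ 2 :=
      pow_le_pow_left₀ (by positivity) (by linarith) 2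
    have h3ph : (0:ℝ) ≤ 3 * ph := by positivity
    exact mul_le_mul_of_nonneg_left hmono h3ph
  -- integrability
  have hgint : ∀ j v, Integrable (g j v) (ν j) := fun j v =>
    ⟨(hgm j v).aestronglyMeasurable,
      HasFiniteIntegral.of_bounded (C := 3 * ph * (1 + Cβ * S v) ^ 2)
        (ae_of_all _ fun e => by simpa [Real.norm_eq_abs] using hgbd j v e)⟩
  have hx2int : ∀ j v, Integrable (fun e => (x j v e) ^ 2) (ν j) := by
    intro j v
    refine ⟨((hxm j v).pow_const 2).aestronglyMeasurable,
      HasFiniteIntegral.of_bounded (C := (Cβ * S v) ^ 2) (ae_of_all _ fun e => ?_)⟩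
    rw [Real.norm_eq_abs, abs_pow, ← sq_abs]
    exact pow_le_pow_left₀ (abs_nonneg _) (by simpa using hxbd j v e) 2
  -- continuity of F
  have hScont : Continuous S := continuous_finset_sum _ fun i _ => (continuous_apply i).abs
  have hxc : ∀ j e, Continuous fun v => x j v e := fun j e =>
    continuous_finset_sum _ fun i _ => (continuous_apply i).mul continuous_const
  have hFcont : Continuous F := by
    have hpoly : Continuous fun v : Fin m → ℝ =>
        Pp * ∑ k, (∑ i, σ0 i k * v i) ^ 2 + 2 * Pp * ∑ i, μ0 i * v i :=
      ((continuous_const.mul (continuous_finset_sum _ fun k _ =>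
          (continuous_finset_sum _ fun i _ => continuous_const.mul (continuous_apply i)).pow 2))).add
        (continuous_const.mul (continuous_finset_sum _ fun i _ =>
          continuous_const.mul (continuous_apply i)))
    refine hpoly.add (continuous_finset_sum _ fun j _ => ?_)
    rw [continuous_iff_continuousAt]
    intro v₀
    refine continuousAt_of_dominated (bound := fun _ => 3 * ph * (1 + Cβ * (S v₀ + m)) ^ 2)
      (Filter.Eventually.of_forall fun v => (hgm j v).aestronglyMeasurable) ?_ (integrable_const _) ?_
    · filter_upwards [Metric.ball_mem_nhds v₀ one_pos] with v hv
      refine ae_of_all _ fun e => ?_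
      have hSv : S v ≤ S v₀ + m := by
        have hi : ∀ i, |v i| ≤ |v₀ i| + 1 := by
          intro i
          have hd : dist (v i) (v₀ i) ≤ dist v v₀ := dist_le_pi_dist v v₀ i
          have hd2 : |v i - v₀ i| < 1 := lt_of_le_of_lt (by rw [← Real.dist_eq]; exact hd) hv
          have := abs_sub_abs_le_abs_sub (v i) (v₀ i)
          linarith
        calc S v ≤ ∑ i, (|v₀ i| + 1) := Finset.sum_le_sum fun i _ => hi i
        _ = S v₀ + m := by
            rw [Finset.sum_add_distrib, Finset.sum_const, Finset.card_univ]
            simp [hSdef]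
      rw [Real.norm_eq_abs]
      refine le_trans (hgbd j v e) ?_
      have h0 : 0 ≤ S v := hS0 v
      have hmono : (1 + Cβ * S v) ^ 2 ≤ (1 + Cβ * (S v₀ + m)) ^ 2 :=
        pow_le_pow_left₀ (by positivity) (by nlinarith) 2
      have h3ph : (0:ℝ) ≤ 3 * ph := by positivity
      exact mul_le_mul_of_nonneg_left hmono h3ph
    · refine ae_of_all _ fun e => Continuous.continuousAt ?_
      have h1x : Continuous fun v => 1 + x j v e := continuous_const.add (hxc j e)
      exact (continuous_const.mul ((((h1x.max continuous_const).pow 2).sub continuous_const).sub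
          (continuous_const.mul (hxc j e)))).add
        (continuous_const.mul ((h1x.neg.max continuous_const).pow 2))
  -- coercivity
  have hcoer : ∀ v : Fin m → ℝ, pl * δ * (∑ i, v i ^ 2) - K₁ * S v - K₀ ≤ F v := by
    intro v
    have hA : 0 ≤ ∑ k, (∑ i, σ0 i k * v i) ^ 2 := Finset.sum_nonneg fun k _ => sq_nonneg _
    have hSv := hS0 v
    have hL : |∑ i, μ0 i * v i| ≤ Cμ * S v := by
      calc |∑ i, μ0 i * v i| ≤ ∑ i, |μ0 i * v i| := Finset.abs_sum_le_sum_abs _ _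
      _ ≤ ∑ i, Cμ * |v i| := by
          refine Finset.sum_le_sum fun i _ => ?_
          rw [abs_mul]
          exact mul_le_mul_of_nonneg_right (hμ0 i) (abs_nonneg _)
      _ = Cμ * S v := by rw [hSdef, Finset.mul_sum]
    have hj : ∀ j : Fin ℓ, pl * (∫ e, (x j v e) ^ 2 ∂ν j)
        - Pp * (1 + 2 * (Cβ * S v)) * (ν j univ).toReal ≤ ∫ e, g j v e ∂ν j := by
      intro j
      have hpt : ∀ e, pl * (x j v e) ^ 2 - Pp * (1 + 2 * (Cβ * S v)) ≤ g j v e := by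
        intro e
        have hxe := hxbd j v e
        have hy1 : -(Cβ * S v) ≤ x j v e := by linarith only [abs_le.1 hxe, (abs_le.1 hxe).1]
        have hy2 : x j v e ≤ Cβ * S v := le_trans (le_abs_self _) hxe
        have hCs : 0 ≤ Cβ * S v := mul_nonneg hCβ (hS0 v)
        exact gptbound hpl h1 h3 h2 hCs hy1 hy2
      calc pl * (∫ e, (x j v e) ^ 2 ∂ν j) - Pp * (1 + 2 * (Cβ * S v)) * (ν j univ).toReal
          = ∫ e, (pl * (x j v e) ^ 2 - Pp * (1 + 2 * (Cβ * S v))) ∂ν j := by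
            rw [integral_sub ((hx2int j v).const_mul pl) (integrable_const _),
              integral_const_mul, integral_const, smul_eq_mul, measureReal_def]
            ring
      _ ≤ ∫ e, g j v e ∂ν j :=
          integral_mono (((hx2int j v).const_mul pl).sub (integrable_const _)) (hgint j v)
            fun e => hpt e
    have hsumj : pl * (∑ j, ∫ e, (x j v e) ^ 2 ∂ν j) - Pp * (1 + 2 * (Cβ * S v)) * V
        ≤ ∑ j, ∫ e, g j v e ∂ν j := by
      have := Finset.sum_le_sum (fun j (_ : j ∈ Finset.univ) => hj j)
      rw [Finset.sum_sub_distrib, ← Finset.mul_sum, ← Finset.mul_sum] at this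
      exact this
    have helv := hell v
    have h2PL : -(2 * ph * (Cμ * S v)) ≤ 2 * Pp * ∑ i, μ0 i * v i := by
      have hneg : -(Cμ * S v) ≤ ∑ i, μ0 i * v i := by linarith only [(abs_le.1 hL).1]
      have hCs : 0 ≤ Cμ * S v := mul_nonneg hCμ (hS0 v)
      have hPpL := lin_lb hPp h3 hCs hneg
      linarith only [hPpL]
    have hAc : pl * (∑ k, (∑ i, σ0 i k * v i) ^ 2) ≤ Pp * (∑ k, (∑ i, σ0 i k * v i) ^ 2) :=
      mul_le_mul_of_nonneg_right h1 hA
    have hC1 : Pp * (1 + 2 * (Cβ * S v)) * V ≤ ph * (1 + 2 * (Cβ * S v)) * V := by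
      have hq : (0:ℝ) ≤ 1 + 2 * (Cβ * S v) := by
        have := mul_nonneg hCβ (hS0 v); linarith only [this]
      exact mul_le_mul_of_nonneg_right (mul_le_mul_of_nonneg_right h3 hq) hV
    have hellc : pl * (δ * ∑ i, v i ^ 2) ≤ pl * ((∑ k, (∑ i, σ0 i k * v i) ^ 2)
        + ∑ j, ∫ e, (x j v e) ^ 2 ∂ν j) := mul_le_mul_of_nonneg_left helv hpl.le
    rw [hFdef, hK₁def, hK₀def]
    simp only
    linarith only [hsumj, h2PL, hAc, hC1, hellc]
  -- the compact candidate set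
  set K : Set (Fin m → ℝ) := {v | (∀ i, 0 ≤ v i) ∧ S v ≤ R} with hKdef
  have hKclosed : IsClosed K := by
    have h1c : IsClosed {v : Fin m → ℝ | ∀ i, 0 ≤ v i} := by
      have heq : {v : Fin m → ℝ | ∀ i, 0 ≤ v i} = ⋂ i, {v | 0 ≤ v i} := by ext v; simp
      rw [heq]
      exact isClosed_iInter fun i => isClosed_le continuous_const (continuous_apply i)
    have heq2 : K = {v : Fin m → ℝ | ∀ i, 0 ≤ v i} ∩ {v | S v ≤ R} := rfl
    rw [heq2]
    exact h1c.inter (isClosed_le hScont continuous_const)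
  have hKsub : K ⊆ Metric.closedBall 0 R := by
    intro v hv
    rw [Metric.mem_closedBall]
    rw [dist_pi_le_iff (by linarith : (0:ℝ) ≤ R)]
    intro i
    have h1b : |v i| ≤ S v :=
      Finset.single_le_sum (f := fun i => |v i|) (fun i _ => abs_nonneg _) (Finset.mem_univ i)
    have : dist (v i) ((0 : Fin m → ℝ) i) = |v i| := by
      simp [Real.dist_eq]
    rw [this]
    exact h1b.trans hv.2
  have hKcomp : IsCompact K :=
    Metric.isCompact_of_isClosed_isBounded hKclosed (Metric.isBounded_closedBall.subset hKsub)
  have h0K : (0 : Fin m → ℝ) ∈ K := by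
    constructor
    · intro i; exact le_rfl
    · have : S (0 : Fin m → ℝ) = 0 := by
        rw [hSdef]; simp
      rw [this]; linarith
  obtain ⟨vh, hvK, hmin⟩ := hKcomp.exists_isMinOn ⟨0, h0K⟩ hFcont.continuousOn
  have hF0 : F 0 = 0 := by
    have hx0 : ∀ j e, x j (0 : Fin m → ℝ) e = 0 := by
      intro j e; rw [hxdef]; simp
    have hg0 : ∀ j e, g j (0 : Fin m → ℝ) e = 0 := by
      intro j e; rw [hgdef]; simp only [hx0]; norm_num
    rw [hFdef]
    simp only [hg0]
    simp
  have hFv0 : F vh ≤ 0 := by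
    have h' := isMinOn_iff.mp hmin 0 h0K
    rw [hF0] at h'
    exact h'
  -- vh is a global minimizer on the orthant
  have hlow : ∀ w : Fin m → ℝ, (∀ i, 0 ≤ w i) → F vh ≤ F w := by
    intro w hw
    rcases le_or_gt (S w) R with h | h
    · exact isMinOn_iff.mp hmin w ⟨hw, h⟩
    · -- outside the ball the function is positive
      have hS1 : 1 ≤ S w := by linarith
      have hQ : (S w) ^ 2 ≤ m * ∑ i, w i ^ 2 := by
        have hcs := sq_sum_le_card_mul_sum_sq (s := Finset.univ) (f := fun i => |w i|)
        simpa [sq_abs, Finset.card_univ] using hcs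
      have hRm : (K₁ + K₀ + 1) * m ≤ (R - 1) * (pl * δ) := by
        have h' : (K₁ + K₀ + 1) * m / (pl * δ) ≤ R - 1 := by linarith only [hR]
        exact (div_le_iff₀ (by positivity)).1 h'
      have hc := hcoer w
      have e1 : pl * δ * (S w) ^ 2 ≤ pl * δ * (m * ∑ i, w i ^ 2) :=
        mul_le_mul_of_nonneg_left hQ (by positivity)
      have e2 : pl * δ * (R * S w) < pl * δ * (S w * S w) := by
        apply mul_lt_mul_of_pos_left _ (by positivity)
        have : 0 < S w := by linarith
        exact mul_lt_mul_of_pos_right h this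
      have e3 : ((K₁ + K₀ + 1) * m) * S w ≤ ((R - 1) * (pl * δ)) * S w :=
        mul_le_mul_of_nonneg_right hRm (by linarith)
      have e4 : K₀ ≤ K₀ * S w := by nlinarith only [hK₀, hS1]
      have e4m : (m:ℝ) * K₀ ≤ (m:ℝ) * (K₀ * S w) := mul_le_mul_of_nonneg_left e4 hmR.le
      have e5 : 0 < (m:ℝ) * S w := mul_pos hmR (by linarith)
      have hcm : (m:ℝ) * (pl * δ * (∑ i, w i ^ 2) - K₁ * S w - K₀) ≤ (m:ℝ) * F w :=
        mul_le_mul_of_nonneg_left hc hmR.le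
      have e6 : 0 ≤ pl * δ * S w := mul_nonneg (by positivity) (hS0 w)
      have hpos : 0 < (m:ℝ) * F w := by linarith only [hcm, e1, e2, e3, e4m, e5, e6]
      have : 0 < F w := by
        by_contra hcon
        push_neg at hcon
        nlinarith only [hpos, hcon, hmR]
      linarith
  have hleast : IsLeast ((fun w => F w) '' {w : Fin m → ℝ | ∀ i, 0 ≤ w i}) (F vh) := by
    constructor
    · exact ⟨vh, hvK.1, rfl⟩
    · rintro y ⟨w, hw, rfl⟩
      exact hlow w hw
  refine ⟨vh, hvK.1, ?_, ?_⟩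
  · have hsum : ∑ i, vh i ^ 2 ≤ (S vh) ^ 2 := by
      have := Finset.sum_sq_le_sq_sum_of_nonneg
        (s := Finset.univ) (f := fun i => |vh i|) (fun i _ => abs_nonneg _)
      simpa [sq_abs] using this
    calc Real.sqrt (∑ i, vh i ^ 2) ≤ Real.sqrt ((S vh) ^ 2) := Real.sqrt_le_sqrt hsum
    _ = S vh := Real.sqrt_sq (hS0 vh)
    _ ≤ R := hvK.2
  · exact (hleast.csInf_eq).symm


lemma quad_id {E : Type} [MeasurableSpace E] {m n ℓ : ℕ}
    (ν : Fin ℓ → Measure E) (σ0 : Matrix (Fin m) (Fin n) ℝ) (b : Fin ℓ → E → Fin m → ℝ)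
    (hint : ∀ j i k, Integrable (fun e => b j e i * b j e k) (ν j)) (v : Fin m → ℝ) :
    ∑ i, ∑ k, v i * ((∑ j', σ0 i j' * σ0 k j') + ∑ j, ∫ e, b j e i * b j e k ∂ν j) * v k
      = (∑ k, (∑ i, σ0 i k * v i) ^ 2) + ∑ j, ∫ e, (∑ i, v i * b j e i) ^ 2 ∂ν j := by
  have part1 : ∑ i, ∑ k, v i * (∑ j', σ0 i j' * σ0 k j') * v k
      = ∑ k, (∑ i, σ0 i k * v i) ^ 2 := by
    have h1 : ∀ i k : Fin m, v i * (∑ j', σ0 i j' * σ0 k j') * v k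
        = ∑ j', (σ0 i j' * v i) * (σ0 k j' * v k) := by
      intro i k
      rw [Finset.mul_sum, Finset.sum_mul]
      exact Finset.sum_congr rfl fun j' _ => by ring
    simp_rw [h1]
    calc ∑ i, ∑ k, ∑ j', (σ0 i j' * v i) * (σ0 k j' * v k)
        = ∑ i, ∑ j', ∑ k : Fin m, (σ0 i j' * v i) * (σ0 k j' * v k) :=
          Finset.sum_congr rfl fun i _ => Finset.sum_comm
      _ = ∑ j', ∑ i, ∑ k : Fin m, (σ0 i j' * v i) * (σ0 k j' * v k) :=
          Finset.sum_comm
      _ = ∑ j', (∑ i, σ0 i j' * v i) ^ 2 := by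
          refine Finset.sum_congr rfl fun j' _ => ?_
          rw [sq, Finset.sum_mul_sum]
  have part2 : ∀ j : Fin ℓ, ∫ e, (∑ i, v i * b j e i) ^ 2 ∂ν j
      = ∑ i, ∑ k, v i * (∫ e, b j e i * b j e k ∂ν j) * v k := by
    intro j
    have hpt : (fun e => (∑ i, v i * b j e i) ^ 2)
        = fun e => ∑ i, ∑ k, v i * (b j e i * b j e k) * v k := by
      funext e
      rw [sq, Finset.sum_mul_sum]
      exact Finset.sum_congr rfl fun i _ => Finset.sum_congr rfl fun k _ => by ring
    rw [hpt]
    rw [integral_finset_sum _ (fun i _ => integrable_finset_sum _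
      (fun k _ => ((hint j i k).const_mul (v i)).mul_const (v k)))]
    refine Finset.sum_congr rfl fun i _ => ?_
    rw [integral_finset_sum _ (fun k _ => ((hint j i k).const_mul (v i)).mul_const (v k))]
    refine Finset.sum_congr rfl fun k _ => ?_
    have h2 : (fun e => v i * (b j e i * b j e k) * v k)
        = fun e => (v i * v k) * (b j e i * b j e k) := funext fun e => by ring
    rw [h2, integral_const_mul]
    ring
  calc ∑ i, ∑ k, v i * ((∑ j', σ0 i j' * σ0 k j') + ∑ j, ∫ e, b j e i * b j e k ∂ν j) * v k
      = (∑ i, ∑ k, v i * (∑ j', σ0 i j' * σ0 k j') * v k)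
        + ∑ i, ∑ k, v i * (∑ j, ∫ e, b j e i * b j e k ∂ν j) * v k := by
        rw [← Finset.sum_add_distrib]
        refine Finset.sum_congr rfl fun i _ => ?_
        rw [← Finset.sum_add_distrib]
        exact Finset.sum_congr rfl fun k _ => by ring
  _ = (∑ k, (∑ i, σ0 i k * v i) ^ 2) + ∑ j, ∫ e, (∑ i, v i * b j e i) ^ 2 ∂ν j := by
        rw [part1]
        congr 1
        simp_rw [part2, Finset.mul_sum, Finset.sum_mul]
        calc ∑ i, ∑ k, ∑ j, (v i * ∫ e, b j e i * b j e k ∂ν j) * v k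
            = ∑ i, ∑ j, ∑ k, (v i * ∫ e, b j e i * b j e k ∂ν j) * v k :=
              Finset.sum_congr rfl fun i _ => Finset.sum_comm
          _ = ∑ j, ∑ i, ∑ k, (v i * ∫ e, b j e i * b j e k ∂ν j) * v k :=
              Finset.sum_comm

/-- along any positive solution of the Riccati system, the infima defining
`H*₊` and `H*₋` are attained at points of `ℝ^m₊` of uniformly bounded (Euclidean) norm. -/
theorem stmt3 {E : Type} [MeasurableSpace E] {m n ℓ : ℕ}
    (hm : 0 < m) (hn : 0 < n) (hl : 0 < ℓ)
    (T : ℝ) (hT : 0 < T)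
    (μ : ℝ → Fin m → ℝ) (σ : ℝ → Matrix (Fin m) (Fin n) ℝ)
    (ν : Fin ℓ → Measure E) [∀ j, IsFiniteMeasure (ν j)]
    (β : Fin ℓ → ℝ → E → Fin m → ℝ)
    (hμmeas : Measurable μ) (hμbd : ∃ C, ∀ t ∈ Icc (0:ℝ) T, ∀ i, |μ t i| ≤ C)
    (hσmeas : ∀ i k, Measurable fun t => σ t i k)
    (hσbd : ∃ C, ∀ t ∈ Icc (0:ℝ) T, ∀ i k, |σ t i k| ≤ C)
    (hβmeas : ∀ j, Measurable (Function.uncurry (β j)))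
    (hβbd : ∃ C, ∀ j, ∀ t ∈ Icc (0:ℝ) T, ∀ e i, |β j t e i| ≤ C)
    (hβgt : ∀ j, ∀ t ∈ Icc (0:ℝ) T, ∀ e i, -1 < β j t e i)
    (δ : ℝ) (hδ : 0 < δ)
    (hell : ∀ t ∈ Icc (0:ℝ) T, ∀ v : Fin m → ℝ,
      δ * ∑ i, v i ^ 2 ≤ ∑ i, ∑ k, v i * SigmaMat σ ν β t i k * v k)
    (Pp Pm : ℝ → ℝ)
    (hsol : IsPositiveRiccatiSolution μ σ ν β T Pp Pm) :
    ∃ C : ℝ, 0 < C ∧ ∀ t ∈ Icc (0:ℝ) T,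
      ∃ vp vm : Fin m → ℝ,
        (∀ i, 0 ≤ vp i) ∧ (∀ i, 0 ≤ vm i) ∧
        Real.sqrt (∑ i, vp i ^ 2) ≤ C ∧ Real.sqrt (∑ i, vm i ^ 2) ≤ C ∧
        Hplus μ σ ν β t vp (Pp t) (Pm t) = HstarPlus μ σ ν β t (Pp t) (Pm t) ∧
        Hminus μ σ ν β t vm (Pp t) (Pm t) = HstarMinus μ σ ν β t (Pp t) (Pm t) := by
  obtain ⟨hPpc, hPmc, hpos, -, -⟩ := hsol
  -- uniform positive lower/upper bounds for Pp, Pm on [0,T]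
  have hne : (Icc (0:ℝ) T).Nonempty := ⟨0, left_mem_Icc.mpr hT.le⟩
  obtain ⟨t₁, ht₁, hmin₁⟩ := isCompact_Icc.exists_isMinOn hne (hPpc.inf hPmc)
  obtain ⟨t₂, ht₂, hmax₂⟩ := isCompact_Icc.exists_isMaxOn hne (hPpc.sup hPmc)
  set pl : ℝ := min (Pp t₁) (Pm t₁) with hpldef
  set ph : ℝ := max (Pp t₂) (Pm t₂) with hphdef
  have hpl : 0 < pl := lt_min (hpos t₁ ht₁).1 (hpos t₁ ht₁).2
  have hplPp : ∀ t ∈ Icc (0:ℝ) T, pl ≤ Pp t := fun t ht =>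
    le_trans (isMinOn_iff.mp hmin₁ t ht) (min_le_left _ _)
  have hplPm : ∀ t ∈ Icc (0:ℝ) T, pl ≤ Pm t := fun t ht =>
    le_trans (isMinOn_iff.mp hmin₁ t ht) (min_le_right _ _)
  have hphPp : ∀ t ∈ Icc (0:ℝ) T, Pp t ≤ ph := fun t ht =>
    le_trans (le_max_left _ _) (isMaxOn_iff.mp hmax₂ t ht)
  have hphPm : ∀ t ∈ Icc (0:ℝ) T, Pm t ≤ ph := fun t ht =>
    le_trans (le_max_right _ _) (isMaxOn_iff.mp hmax₂ t ht)
  have hph : 0 < ph := lt_of_lt_of_le hpl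
    (le_trans (hplPp t₂ ht₂) (hphPp t₂ ht₂))
  -- constants
  obtain ⟨Cμ₀, hCμ₀⟩ := hμbd
  obtain ⟨Cβ₀, hCβ₀⟩ := hβbd
  set Cμ : ℝ := max Cμ₀ 0 with hCμdef
  set Cβ : ℝ := max Cβ₀ 0 with hCβdef
  have hCμ : 0 ≤ Cμ := le_max_right _ _
  have hCβ : 0 ≤ Cβ := le_max_right _ _
  have hμle : ∀ t ∈ Icc (0:ℝ) T, ∀ i, |μ t i| ≤ Cμ := fun t ht i =>
    le_trans (hCμ₀ t ht i) (le_max_left _ _)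
  have hβle : ∀ j, ∀ t ∈ Icc (0:ℝ) T, ∀ e i, |β j t e i| ≤ Cβ := fun j t ht e i =>
    le_trans (hCβ₀ j t ht e i) (le_max_left _ _)
  set V : ℝ := ∑ j, (ν j univ).toReal with hVdef
  have hV : 0 ≤ V := Finset.sum_nonneg fun j _ => ENNReal.toReal_nonneg
  set C : ℝ := (2 * ph * (Cμ + V * Cβ) + ph * V + 1) * m / (pl * δ) + 1 with hCdef
  have hCnum : 0 ≤ (2 * ph * (Cμ + V * Cβ) + ph * V + 1) * m := by positivity
  have hC0 : 0 < C := by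
    have h0 : 0 ≤ (2 * ph * (Cμ + V * Cβ) + ph * V + 1) * m / (pl * δ) := by positivity
    rw [hCdef]; linarith
  refine ⟨C, hC0, fun t ht => ?_⟩
  -- measurability and integrability at time t
  have hbmeas : ∀ j i, Measurable fun e => β j t e i := by
    intro j i
    have h1 : Measurable fun e : E => Function.uncurry (β j) (t, e) :=
      (hβmeas j).comp (measurable_const.prodMk measurable_id)
    exact (measurable_pi_apply i).comp h1
  have hbb_int : ∀ j i k, Integrable (fun e => β j t e i * β j t e k) (ν j) := by
    intro j i k
    refine ⟨((hbmeas j i).mul (hbmeas j k)).aestronglyMeasurable,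
      HasFiniteIntegral.of_bounded (C := Cβ * Cβ) (ae_of_all _ fun e => ?_)⟩
    rw [Real.norm_eq_abs, abs_mul]
    exact mul_le_mul (hβle j t ht e i) (hβle j t ht e k) (abs_nonneg _) hCβ
  -- ellipticity in the form used by the abstract lemma
  have hellt : ∀ v : Fin m → ℝ, δ * ∑ i, v i ^ 2 ≤
      (∑ k, (∑ i, σ t i k * v i) ^ 2) + ∑ j, ∫ e, (∑ i, v i * β j t e i) ^ 2 ∂ν j := by
    intro v
    have h := hell t ht v
    have hq := quad_id ν (σ t) (fun j e => β j t e) hbb_int v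
    simp only [SigmaMat, Matrix.of_apply] at h
    rw [hq] at h
    exact h
  have hellt' : ∀ v : Fin m → ℝ, δ * ∑ i, v i ^ 2 ≤
      (∑ k, (∑ i, σ t i k * v i) ^ 2) + ∑ j, ∫ e, (∑ i, v i * -(β j t e i)) ^ 2 ∂ν j := by
    intro v
    refine (hellt v).trans_eq ?_
    congr 1
    refine Finset.sum_congr rfl fun j _ => ?_
    congr 1
    funext e
    have hx : ∑ i, v i * -(β j t e i) = -∑ i, v i * β j t e i := by
      rw [← Finset.sum_neg_distrib]
      exact Finset.sum_congr rfl fun i _ => by ring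
    rw [hx, neg_sq]
  -- the plus-minimizer
  obtain ⟨vp, hvp0, hvpb, hvpeq⟩ := exists_bounded_min hm ν (μ t) (σ t)
    (fun j e => β j t e) hbmeas Cμ Cβ hCμ hCβ (hμle t ht) (fun j e i => hβle j t ht e i)
    (Pp t) (Pm t) pl ph δ hpl hδ (hplPp t ht) (hplPm t ht) (hphPp t ht) (hphPm t ht)
    hellt C le_rfl
  -- the minus-minimizer, via the transformation μ ↦ -μ, β ↦ -β, (P₊,P₋) ↦ (P₋,P₊)
  obtain ⟨vm, hvm0, hvmb, hvmeq⟩ := exists_bounded_min hm ν (fun i => -(μ t i)) (σ t)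
    (fun j e i => -(β j t e i)) (fun j i => (hbmeas j i).neg) Cμ Cβ hCμ hCβ
    (fun i => by rw [abs_neg]; exact hμle t ht i)
    (fun j e i => by rw [abs_neg]; exact hβle j t ht e i)
    (Pm t) (Pp t) pl ph δ hpl hδ (hplPm t ht) (hplPp t ht) (hphPm t ht) (hphPp t ht)
    hellt' C le_rfl
  -- identify the transformed functional with Hminus
  have hHm : ∀ w : Fin m → ℝ,
      (Pm t * ∑ k, (∑ i, σ t i k * w i) ^ 2 + 2 * Pm t * ∑ i, (-(μ t i)) * w i
        + ∑ j, ∫ e, (Pm t * ((max (1 + ∑ i, w i * -(β j t e i)) 0) ^ 2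
            - 1 - 2 * ∑ i, w i * -(β j t e i))
          + Pp t * (max (-(1 + ∑ i, w i * -(β j t e i))) 0) ^ 2) ∂(ν j))
      = Hminus μ σ ν β t w (Pp t) (Pm t) := by
    intro w
    rw [Hminus]
    have hx : ∀ j e, ∑ i, w i * -(β j t e i) = -∑ i, w i * β j t e i := by
      intro j e
      rw [← Finset.sum_neg_distrib]
      exact Finset.sum_congr rfl fun i _ => by ring
    have hlin : 2 * Pm t * ∑ i, (-(μ t i)) * w i = -(2 * Pm t * ∑ i, μ t i * w i) := by
      rw [show ∑ i, (-(μ t i)) * w i = -∑ i, μ t i * w i by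
        rw [← Finset.sum_neg_distrib]; exact Finset.sum_congr rfl fun i _ => by ring]
      ring
    rw [hlin]
    have hint_eq : ∀ j : Fin ℓ,
        (∫ e, (Pm t * ((max (1 + ∑ i, w i * -(β j t e i)) 0) ^ 2
            - 1 - 2 * ∑ i, w i * -(β j t e i))
          + Pp t * (max (-(1 + ∑ i, w i * -(β j t e i))) 0) ^ 2) ∂(ν j))
        = ∫ e, (Pm t * ((max (1 - ∑ i, w i * β j t e i) 0) ^ 2
            - 1 + 2 * ∑ i, w i * β j t e i)
          + Pp t * (max (-(1 - ∑ i, w i * β j t e i)) 0) ^ 2) ∂(ν j) := by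
      intro j
      congr 1
      funext e
      rw [hx j e]
      ring_nf
    rw [Finset.sum_congr rfl fun j _ => hint_eq j]
    ring
  have h2 : (fun w : Fin m → ℝ =>
      Pm t * ∑ k, (∑ i, σ t i k * w i) ^ 2 + 2 * Pm t * ∑ i, (-(μ t i)) * w i
        + ∑ j, ∫ e, (Pm t * ((max (1 + ∑ i, w i * -(β j t e i)) 0) ^ 2
            - 1 - 2 * ∑ i, w i * -(β j t e i))
          + Pp t * (max (-(1 + ∑ i, w i * -(β j t e i))) 0) ^ 2) ∂(ν j))
      = fun w : Fin m → ℝ => Hminus μ σ ν β t w (Pp t) (Pm t) := funext hHm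
  refine ⟨vp, vm, hvp0, hvm0, hvpb, hvmb, hvpeq, ?_⟩
  show Hminus μ σ ν β t vm (Pp t) (Pm t) = sInf ((fun v : Fin m → ℝ =>
    Hminus μ σ ν β t v (Pp t) (Pm t)) '' {v : Fin m → ℝ | ∀ i, 0 ≤ v i})
  rw [← h2, ← hHm vm]
  exact hvmeq
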